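/- Let E be a real inner product space, f : E → ℝ differentiable with L-Lipschitz gradient, w ∈ E, and let α > 0, ᾱ > 0, ψ ≥ 0, B ≥ 0, η ≥ 0. Suppose w̄ ∈ E and M ∈ E satisfy: (a) w̄ − w = −(η/α)·(∇f(w) + M); (b) ‖M‖ ≤ (L·(1 + ψ)/ᾱ + ψ)·B·‖∇f(w)‖; (c) ‖w̄ − w‖ ≤ (B·(1 + ψ)·η/ᾱ)·‖∇f(w)‖. Then f(w̄) ≤ f(w) − η·[ (1 − ψ·B)/α − L·B·(1 + ψ)/(α·ᾱ) − L·B²·(1 + ψ)²·η/(2·ᾱ²) ]·‖∇f(w)‖². -/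

import Mathlib

open InnerProductSpace

/-- Descent lemma: an `L`-smooth function satisfies the quadratic upper bound. -/
lemma descent_lemma_aux
    {E : Type*} [NormedAddCommGroup E] [InnerProductSpace ℝ E] [CompleteSpace E]
    (f : E → ℝ) (hf : Differentiable ℝ f) (L : ℝ) (hL : 0 ≤ L)
    (hsmooth : ∀ x y : E, ‖gradient f x - gradient f y‖ ≤ L * ‖x - y‖)
    (x y : E) :
    f y ≤ f x + ⟪gradient f x, y - x⟫_ℝ + L / 2 * ‖y - x‖ ^ 2 := by
  set v := y - x with hv
  have key : ∀ t : ℝ, HasDerivAt (fun t : ℝ => f (x + t • v))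
      ⟪gradient f (x + t • v), v⟫_ℝ t := by
    intro t
    have h1 : HasDerivAt (fun t : ℝ => x + t • v) v t := by
      simpa using ((hasDerivAt_id t).smul_const v).const_add x
    have h2 := ((hf (x + t • v)).hasFDerivAt).comp_hasDerivAt t h1
    have h3 : ⟪gradient f (x + t • v), v⟫_ℝ = fderiv ℝ f (x + t • v) v := by
      rw [← InnerProductSpace.toDual_apply_apply, gradient,
        LinearIsometryEquiv.apply_symm_apply]
    rw [h3]; exact h2
  set F : ℝ → ℝ := fun t => L / 2 * t ^ 2 * ‖v‖ ^ 2 + t * ⟪gradient f x, v⟫_ℝ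
      - f (x + t • v) with hF
  have hF' : ∀ t : ℝ, HasDerivAt F
      (L * t * ‖v‖ ^ 2 + ⟪gradient f x, v⟫_ℝ - ⟪gradient f (x + t • v), v⟫_ℝ) t := by
    intro t
    have hpoly : HasDerivAt (fun t : ℝ => L / 2 * t ^ 2 * ‖v‖ ^ 2 + t * ⟪gradient f x, v⟫_ℝ)
        (L * t * ‖v‖ ^ 2 + ⟪gradient f x, v⟫_ℝ) t := by
      have h1 : HasDerivAt (fun t : ℝ => L / 2 * t ^ 2 * ‖v‖ ^ 2) (L * t * ‖v‖ ^ 2) t := by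
        have := (hasDerivAt_pow 2 t).const_mul (L / 2)
        have := this.mul_const (‖v‖ ^ 2)
        exact this.congr_deriv (by push_cast; ring)
      have h2 : HasDerivAt (fun t : ℝ => t * ⟪gradient f x, v⟫_ℝ)
          (⟪gradient f x, v⟫_ℝ) t := by
        simpa using (hasDerivAt_id t).mul_const (⟪gradient f x, v⟫_ℝ)
      exact h1.add h2
    exact hpoly.sub (key t)
  have hmono : MonotoneOn F (Set.Icc (0:ℝ) 1) := by
    apply monotoneOn_of_deriv_nonneg (convex_Icc 0 1)
    · exact fun t _ => ((hF' t).continuousAt).continuousWithinAt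
    · exact fun t _ => ((hF' t).differentiableAt).differentiableWithinAt
    · intro t ht
      rw [interior_Icc] at ht
      rw [(hF' t).deriv]
      have hcs : ⟪gradient f (x + t • v), v⟫_ℝ - ⟪gradient f x, v⟫_ℝ
          ≤ L * t * ‖v‖ ^ 2 := by
        have h1 : ⟪gradient f (x + t • v) - gradient f x, v⟫_ℝ
            ≤ ‖gradient f (x + t • v) - gradient f x‖ * ‖v‖ :=
          real_inner_le_norm _ _
        have h2 : ‖gradient f (x + t • v) - gradient f x‖ ≤ L * (t * ‖v‖) := by
          have := hsmooth (x + t • v) x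
          simpa [norm_smul, abs_of_nonneg ht.1.le, mul_assoc] using this
        have h3 : ‖gradient f (x + t • v) - gradient f x‖ * ‖v‖
            ≤ L * (t * ‖v‖) * ‖v‖ :=
          mul_le_mul_of_nonneg_right h2 (norm_nonneg v)
        calc ⟪gradient f (x + t • v), v⟫_ℝ - ⟪gradient f x, v⟫_ℝ
            = ⟪gradient f (x + t • v) - gradient f x, v⟫_ℝ := by
              rw [inner_sub_left]
          _ ≤ L * (t * ‖v‖) * ‖v‖ := h1.trans h3
          _ = L * t * ‖v‖ ^ 2 := by ring
      linarith
  have h01 := hmono (Set.mem_Icc.2 ⟨le_refl 0, zero_le_one⟩)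
      (Set.mem_Icc.2 ⟨zero_le_one, le_refl 1⟩) zero_le_one
  have hF0 : F 0 = - f x := by simp [hF]
  have hF1 : F 1 = L / 2 * ‖v‖ ^ 2 + ⟪gradient f x, v⟫_ℝ - f y := by
    simp [hF, hv]
  rw [hF0, hF1] at h01
  linarith

/-- Per-round descent for the full-participation averaged iterate
(Eq. (27) of the FedSSG convergence proof). -/
theorem fedssg_descent_full_participation
    {E : Type*} [NormedAddCommGroup E] [InnerProductSpace ℝ E] [CompleteSpace E]
    (f : E → ℝ) (hf : Differentiable ℝ f) (L : ℝ)
    (hsmooth : ∀ x y : E, ‖gradient f x - gradient f y‖ ≤ L * ‖x - y‖)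
    (w wbar M : E) (α αbar ψ B η : ℝ)
    (hα : 0 < α) (hαbar : 0 < αbar) (hψ : 0 ≤ ψ) (hB : 0 ≤ B) (hη : 0 ≤ η)
    (ha : wbar - w = (-(η / α)) • (gradient f w + M))
    (hb : ‖M‖ ≤ (L * (1 + ψ) / αbar + ψ) * B * ‖gradient f w‖)
    (hc : ‖wbar - w‖ ≤ (B * (1 + ψ) * η / αbar) * ‖gradient f w‖) :
    f wbar ≤ f w - η * ((1 - ψ * B) / α - L * B * (1 + ψ) / (α * αbar)
        - L * B ^ 2 * (1 + ψ) ^ 2 * η / (2 * αbar ^ 2)) * ‖gradient f w‖ ^ 2 := by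
  set g := gradient f w with hg
  by_cases hg0 : g = 0
  · have : wbar - w = 0 := by
      have h := hc
      rw [hg0] at h
      simp at h
      exact h
    have hwe : wbar = w := by
      have := sub_eq_zero.mp this; exact this
    rw [hwe, hg0]
    simp
  · -- L ≥ 0
    have hGpos : 0 < ‖g‖ := norm_pos_iff.mpr hg0
    have hL : 0 ≤ L := by
      have h := hsmooth w (w + g)
      have h2 : ‖w - (w + g)‖ = ‖g‖ := by
        simp [norm_sub_rev]
      rw [h2, ← hg] at h
      nlinarith [norm_nonneg (gradient f w - gradient f (w + g))]
    have hdesc := descent_lemma_aux f hf L hL hsmooth w wbar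
    rw [← hg] at hdesc
    set G := ‖g‖ with hG
    -- inner product bound
    have hinner : ⟪g, wbar - w⟫_ℝ ≤ -(η / α) * G ^ 2
        + (η / α) * ((L * (1 + ψ) / αbar + ψ) * B) * G ^ 2 := by
      rw [ha, real_inner_smul_right, inner_add_right,
        real_inner_self_eq_norm_sq]
      have hgm : -(G * ‖M‖) ≤ ⟪g, M⟫_ℝ := by
        have := real_inner_le_norm g M
        have h2 := abs_real_inner_le_norm g M
        nlinarith [neg_abs_le (⟪g, M⟫_ℝ), abs_nonneg (⟪g, M⟫_ℝ)]
      have hM : ‖M‖ ≤ (L * (1 + ψ) / αbar + ψ) * B * G := hb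
      have hηα : 0 ≤ η / α := div_nonneg hη hα.le
      have h4 : -((L * (1 + ψ) / αbar + ψ) * B * G ^ 2) ≤ ⟪g, M⟫_ℝ := by
        nlinarith [hgm, mul_le_mul_of_nonneg_left hM hGpos.le]
      rw [← hG]
      nlinarith [mul_le_mul_of_nonneg_left h4 hηα]
    -- norm squared bound
    have hnorm : ‖wbar - w‖ ^ 2 ≤ (B * (1 + ψ) * η / αbar) ^ 2 * G ^ 2 := by
      have h1 : 0 ≤ ‖wbar - w‖ := norm_nonneg _
      nlinarith [hc, norm_nonneg (wbar - w)]
    have hL2 : L / 2 * ‖wbar - w‖ ^ 2 ≤ L / 2 * ((B * (1 + ψ) * η / αbar) ^ 2 * G ^ 2) := by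
      apply mul_le_mul_of_nonneg_left hnorm
      linarith
    have hαne : α ≠ 0 := hα.ne'
    have hαbarne : αbar ≠ 0 := hαbar.ne'
    have hfinal : f wbar ≤ f w + (-(η / α) * G ^ 2
        + (η / α) * ((L * (1 + ψ) / αbar + ψ) * B) * G ^ 2)
        + L / 2 * ((B * (1 + ψ) * η / αbar) ^ 2 * G ^ 2) := by
      calc f wbar ≤ f w + ⟪g, wbar - w⟫_ℝ + L / 2 * ‖wbar - w‖ ^ 2 := hdesc
        _ ≤ _ := by linarith
    calc f wbar ≤ f w + (-(η / α) * G ^ 2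
        + (η / α) * ((L * (1 + ψ) / αbar + ψ) * B) * G ^ 2)
        + L / 2 * ((B * (1 + ψ) * η / αbar) ^ 2 * G ^ 2) := hfinal
      _ = f w - η * ((1 - ψ * B) / α - L * B * (1 + ψ) / (α * αbar)
        - L * B ^ 2 * (1 + ψ) ^ 2 * η / (2 * αbar ^ 2)) * G ^ 2 := by
          field_simp
          ring
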